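/- If the open face F_I of Δ is nonempty, then Ψ⁻¹(0) ∩ ℂ^d_{F_I} is nonempty; that is, there exists z ∈ ℂ^d with Σ_{j=1}^d (|z_j|² + λ_j) v_j = 0 for every v ∈ 𝔫 and with z_j = 0 exactly for j ∈ I. -/
import Mathlib


/-- If the open face `F_I` of `Δ` is nonempty, then `Ψ⁻¹(0) ∩ ℂ^d_{F_I}` is
nonempty: there is `z ∈ ℂ^d` with `Σ_j (|z_j|² + λ_j) v_j = 0` for all `v ∈ 𝔫 = ker π`
and with `z_j = 0` exactly for `j ∈ I`. -/
theorem zero_level_inter_face_stratum_nonempty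
    {𝔡 : Type*} [AddCommGroup 𝔡] [Module ℝ 𝔡] [FiniteDimensional ℝ 𝔡]
    {d : ℕ} (X : Fin d → 𝔡) (lam : Fin d → ℝ)
    (π : (Fin d → ℝ) →ₗ[ℝ] 𝔡) (hπ : ∀ j, π (Pi.single j 1) = X j)
    (I : Set (Fin d))
    (hne : ∃ μ : Module.Dual ℝ 𝔡, (∀ j, lam j ≤ μ (X j)) ∧ ∀ j, μ (X j) = lam j ↔ j ∈ I) :
    ∃ z : Fin d → ℂ,
      (∀ v ∈ LinearMap.ker π, ∑ j, (‖z j‖ ^ 2 + lam j) * v j = 0) ∧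
      ∀ j, z j = 0 ↔ j ∈ I := by
  obtain ⟨μ, hle, hiff⟩ := hne
  refine ⟨fun j => (Real.sqrt (μ (X j) - lam j) : ℂ), ?_, ?_⟩
  · intro v hv
    have hnorm : ∀ j, ‖(Real.sqrt (μ (X j) - lam j) : ℂ)‖ ^ 2 + lam j = μ (X j) := by
      intro j
      rw [Complex.norm_real, Real.norm_eq_abs, sq_abs, Real.sq_sqrt (by linarith [hle j])]
      ring
    simp only [hnorm]
    have hv0 : π v = 0 := hv
    have hrepr : v = ∑ j, v j • (Pi.single j 1 : Fin d → ℝ) := by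
      ext k
      simp [Pi.single_apply, Finset.sum_apply]
    have : μ (π v) = ∑ j, μ (X j) * v j := by
      conv_lhs => rw [hrepr]
      rw [map_sum, map_sum]
      simp [hπ, mul_comm]
    rw [hv0, map_zero] at this
    exact this.symm
  · intro j
    constructor
    · intro h
      simp only at h
      have : Real.sqrt (μ (X j) - lam j) = 0 := by exact_mod_cast h
      have := Real.sqrt_eq_zero (by linarith [hle j]) |>.mp this
      exact (hiff j).mp (by linarith)
    · intro h
      have := (hiff j).mpr h
      simp [this]
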